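/- Every simple graph on n vertices with more than (k-1)n/2 edges contains a path with k edges. -/

import Mathlib

section ErdosGallaiHelpers

open SimpleGraph Walk Finset

variable {V : Type*} {G : SimpleGraph V}


/-- getVert is injective on indices of a path. -/
lemma eg_getVert_inj {u v : V} {p : G.Walk u v} (hp : p.IsPath) :
    ∀ i ≤ p.length, ∀ j ≤ p.length, p.getVert i = p.getVert j → i = j := by
  induction p with
  | nil => intro i hi j hj _; simp only [Walk.length_nil, Nat.le_zero] at hi hj; omega
  | cons h q ih =>
    intro i hi j hj hij
    have hq := hp.of_cons
    have hhead : _ ∉ q.support := ((Walk.cons_isPath_iff h q).mp hp).2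
    match i, j with
    | 0, 0 => rfl
    | 0, (m+1) =>
      exfalso
      simp only [Walk.getVert_zero, Walk.getVert_cons_succ] at hij
      exact hhead (Walk.mem_support_iff_exists_getVert.mpr ⟨m, hij.symm, by simpa using hj⟩)
    | (m+1), 0 =>
      exfalso
      simp only [Walk.getVert_zero, Walk.getVert_cons_succ] at hij
      exact hhead (Walk.mem_support_iff_exists_getVert.mpr ⟨m, hij, by simpa using hi⟩)
    | (m+1), (m'+1) =>
      simp only [Walk.getVert_cons_succ] at hij
      have := ih hq m (by simpa using hi) m' (by simpa using hj) hij
      omega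

/-- Truncate a path to any shorter length (as a suffix). -/
lemma eg_truncate {u v : V} (p : G.Walk u v) (hp : p.IsPath) (k : ℕ) (hk : k ≤ p.length) :
    ∃ (w : V) (q : G.Walk w v), q.IsPath ∧ q.length = k ∧ ∀ x ∈ q.support, x ∈ p.support := by
  induction p with
  | nil =>
    refine ⟨_, .nil, by simp, ?_, by simp⟩
    simp only [Walk.length_nil, Nat.le_zero] at hk ⊢; omega
  | cons h q ih =>
    rcases Nat.lt_or_ge k (Walk.length (Walk.cons h q)) with hlt | hge
    · obtain ⟨w, r, hr1, hr2, hr3⟩ := ih hp.of_cons (by simpa [Nat.lt_succ_iff] using hlt)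
      refine ⟨w, r, hr1, hr2, fun x hx => ?_⟩
      rw [Walk.support_cons]; exact List.mem_cons_of_mem _ (hr3 x hx)
    · exact ⟨_, Walk.cons h q, hp, le_antisymm hge hk, fun x hx => hx⟩

/-- Path length bound within a finset. -/
lemma eg_length_lt [DecidableEq V] {u v : V} {p : G.Walk u v} (hp : p.IsPath) {s : Finset V}
    (hs : ∀ x ∈ p.support, x ∈ s) : p.length < s.card := by
  have h1 : p.support.toFinset.card = p.length + 1 := by
    rw [List.toFinset_card_of_nodup hp.support_nodup, Walk.length_support]
  have h2 : p.support.toFinset ⊆ s := fun x hx => hs x (List.mem_toFinset.mp hx)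
  have := Finset.card_le_card h2
  omega

/-- length of takeUntil at position i. -/
lemma eg_length_takeUntil [DecidableEq V] {u v : V} {p : G.Walk u v} (hp : p.IsPath)
    {i : ℕ} (hi : i ≤ p.length) (h : p.getVert i ∈ p.support) :
    (p.takeUntil (p.getVert i) h).length = i := by
  set T := p.takeUntil (p.getVert i) h with hT
  have hlen : T.length ≤ p.length := p.length_takeUntil_le h
  have hgv : p.getVert T.length = p.getVert i := by
    have h2 := Walk.getVert_append T (p.dropUntil (p.getVert i) h) T.length
    rw [p.take_spec h] at h2
    simpa using h2
  exact eg_getVert_inj hp T.length hlen i hi hgv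


lemma eg_mem_takeUntil [DecidableEq V] {u v : V} {p : G.Walk u v} (hp : p.IsPath)
    {i : ℕ} (hi : i ≤ p.length) (h : p.getVert i ∈ p.support) {x : V} :
    x ∈ (p.takeUntil (p.getVert i) h).support ↔ ∃ j ≤ i, p.getVert j = x := by
  set T := p.takeUntil (p.getVert i) h with hT
  have hTlen : T.length = i := eg_length_takeUntil hp hi h
  have hgv : ∀ j ≤ i, T.getVert j = p.getVert j := by
    intro j hj
    have h2 := Walk.getVert_append T (p.dropUntil (p.getVert i) h) j
    rw [p.take_spec h] at h2
    rcases Nat.lt_or_ge j i with hlt | hge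
    · rw [h2]; simp [hTlen, hlt]
    · have : j = i := le_antisymm hj hge
      subst this
      have h3 := Walk.getVert_length T
      rw [hTlen] at h3
      exact h3
  rw [Walk.mem_support_iff_exists_getVert]
  constructor
  · rintro ⟨j, hjx, hjl⟩
    exact ⟨j, by omega, by rw [← hgv j (by omega)]; exact hjx⟩
  · rintro ⟨j, hj, hjx⟩
    exact ⟨j, by rw [hgv j hj]; exact hjx, by omega⟩

lemma eg_mem_dropUntil [DecidableEq V] {u v : V} {p : G.Walk u v} (hp : p.IsPath)
    {i : ℕ} (hi : i ≤ p.length) (h : p.getVert i ∈ p.support) {x : V} :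
    x ∈ (p.dropUntil (p.getVert i) h).support ↔ ∃ j, i + j ≤ p.length ∧ p.getVert (i + j) = x := by
  set T := p.takeUntil (p.getVert i) h with hT
  set D := p.dropUntil (p.getVert i) h with hD
  have hTlen : T.length = i := eg_length_takeUntil hp hi h
  have hDlen : D.length = p.length - i := by
    have h3 : T.length + D.length = p.length := by
      rw [hT, hD, ← Walk.length_append, p.take_spec h]
    omega
  have hgv : ∀ j, D.getVert j = p.getVert (i + j) := by
    intro j
    have h2 := Walk.getVert_append T D (i + j)
    rw [p.take_spec h] at h2
    rw [h2]
    simp [hTlen]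
  rw [Walk.mem_support_iff_exists_getVert]
  constructor
  · rintro ⟨j, hjx, hjl⟩
    refine ⟨j, by omega, by rw [← hgv j]; exact hjx⟩
  · rintro ⟨j, hj, hjx⟩
    rcases Nat.lt_or_ge j (p.length - i + 1) with hlt | hge
    · exact ⟨j, by rw [hgv j]; exact hjx, by omega⟩
    · -- i + j > p.length, getVert (i+j) = v; but also i + j ≤ p.length given. contradiction
      exfalso; omega


/-- Key rotation lemma: if a maximal-type path has the crossing adjacencies, then any vertex
adjacent to the path's support from outside yields a strictly longer path. -/
lemma eg_extend [DecidableEq V] {v0 vl : V} {P : G.Walk v0 vl} (hP : P.IsPath)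
    {i : ℕ} (hiL : i < P.length)
    (hvla : G.Adj vl (P.getVert i)) (hv0b : G.Adj v0 (P.getVert (i + 1)))
    {x y : V} (hx : x ∈ P.support) (hxy : G.Adj x y) (hy : y ∉ P.support) :
    ∃ (z : V) (q : G.Walk y z), q.IsPath ∧ q.length = P.length + 1 ∧
      ∀ w ∈ q.support, w = y ∨ w ∈ P.support := by
  set L := P.length with hL
  have ha : P.getVert i ∈ P.support :=
    Walk.mem_support_iff_exists_getVert.mpr ⟨i, rfl, hiL.le⟩
  have hb : P.getVert (i + 1) ∈ P.support :=
    Walk.mem_support_iff_exists_getVert.mpr ⟨i + 1, rfl, hiL⟩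
  set T := P.takeUntil (P.getVert i) ha with hT
  set D := P.dropUntil (P.getVert (i + 1)) hb with hD
  have hTlen : T.length = i := eg_length_takeUntil hP hiL.le ha
  have hDlen : D.length = L - (i + 1) := by
    have h3 : (P.takeUntil (P.getVert (i+1)) hb).length + D.length = L := by
      rw [hD, ← Walk.length_append, P.take_spec hb]
    have h4 : (P.takeUntil (P.getVert (i+1)) hb).length = i + 1 :=
      eg_length_takeUntil hP hiL hb
    omega
  set C : G.Walk vl vl := Walk.cons hvla (T.reverse.append (Walk.cons hv0b D)) with hC
  have hClen : C.length = L + 1 := by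
    rw [hC, Walk.length_cons, Walk.length_append, Walk.length_reverse, Walk.length_cons,
      hTlen, hDlen]
    omega
  have hCtail : C.support.tail = T.support.reverse ++ D.support := by
    rw [hC, Walk.support_cons, List.tail_cons, Walk.support_append, Walk.support_reverse,
      Walk.support_cons, List.tail_cons]
  have hdisj : ∀ w, w ∈ T.support → w ∈ D.support → False := by
    intro w hwT hwD
    obtain ⟨j, hj, hjw⟩ := (eg_mem_takeUntil hP hiL.le ha).mp hwT
    obtain ⟨j', hj', hjw'⟩ := (eg_mem_dropUntil hP hiL hb).mp hwD
    have := eg_getVert_inj hP j (by omega) (i + 1 + j') hj' (by rw [hjw, hjw'])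
    omega
  have hCtailnodup : C.support.tail.Nodup := by
    rw [hCtail, List.nodup_append]
    refine ⟨List.nodup_reverse.mpr (hP.takeUntil ha).support_nodup,
      (hP.dropUntil hb).support_nodup, ?_⟩
    intro w hwT w' hwD hww
    subst hww
    exact hdisj w (List.mem_reverse.mp hwT) hwD
  have hCsub : ∀ w ∈ C.support, w ∈ P.support := by
    intro w hw
    rw [hC, Walk.support_cons] at hw
    rcases List.mem_cons.mp hw with h | hw
    · exact h ▸ Walk.end_mem_support P
    · rw [Walk.mem_support_append_iff] at hw
      rcases hw with hw | hw
      · rw [Walk.support_reverse, List.mem_reverse] at hw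
        exact P.support_takeUntil_subset ha hw
      · rw [Walk.support_cons] at hw
        rcases List.mem_cons.mp hw with h | hw
        · exact h ▸ Walk.start_mem_support P
        · exact P.support_dropUntil_subset hb hw
  have hCsup : ∀ w ∈ P.support, w ∈ C.support := by
    intro w hw
    obtain ⟨j, hjw, hjL⟩ := Walk.mem_support_iff_exists_getVert.mp hw
    rw [hC, Walk.support_cons]
    refine List.mem_cons.mpr (Or.inr ?_)
    rw [Walk.mem_support_append_iff]
    rcases le_or_gt j i with hji | hji
    · left
      rw [Walk.support_reverse, List.mem_reverse]
      exact (eg_mem_takeUntil hP hiL.le ha).mpr ⟨j, hji, hjw⟩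
    · right
      rw [Walk.support_cons]
      refine List.mem_cons.mpr (Or.inr ?_)
      exact (eg_mem_dropUntil hP hiL hb).mpr ⟨j - (i + 1), by omega,
        by rw [show i + 1 + (j - (i+1)) = j by omega]; exact hjw⟩
  -- rotate the cycle to x
  have hxC : x ∈ C.support := hCsup x hx
  set C' : G.Walk x x := C.rotate x hxC with hC'
  have hC'len : C'.length = L + 1 := by
    have h5 : (C.takeUntil x hxC).length + (C.dropUntil x hxC).length = C.length := by
      rw [← Walk.length_append, C.take_spec hxC]
    rw [hC', Walk.rotate, Walk.length_append]
    omega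
  have hC'tailnodup : C'.support.tail.Nodup :=
    (List.IsRotated.nodup_iff (Walk.support_rotate C x hxC)).mpr hCtailnodup
  have hC'sub : ∀ w ∈ C'.support, w ∈ C.support := by
    intro w hw
    rw [hC', Walk.rotate, Walk.mem_support_append_iff] at hw
    rcases hw with hw | hw
    · exact C.support_dropUntil_subset hxC hw
    · exact C.support_takeUntil_subset hxC hw
  have hC'nil : ¬ C'.Nil := by
    rw [Walk.nil_iff_length_eq, hC'len]
    omega
  set q := C'.tail with hq
  have hqsupp : q.support = C'.support.tail := Walk.support_tail_of_not_nil C' hC'nil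
  have hqpath : q.IsPath := Walk.IsPath.mk' (by rw [hqsupp]; exact hC'tailnodup)
  have hqlen : q.length = L := by
    have h7 := Walk.length_tail_add_one hC'nil
    rw [← hq] at h7
    omega
  have hqsub : ∀ w ∈ q.support, w ∈ P.support := by
    intro w hw
    rw [hqsupp] at hw
    exact hCsub w (hC'sub w (List.mem_of_mem_tail hw))
  refine ⟨_, Walk.cons hxy.symm q.reverse, ?_, ?_, ?_⟩
  · refine hqpath.reverse.cons ?_
    rw [Walk.support_reverse, List.mem_reverse]
    intro hmem
    exact hy (hqsub y hmem)
  · rw [Walk.length_cons, Walk.length_reverse, hqlen]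
  · intro w hw
    rw [Walk.support_cons] at hw
    rcases List.mem_cons.mp hw with h | hw
    · exact Or.inl h
    · rw [Walk.support_reverse, List.mem_reverse] at hw
      exact Or.inr (hqsub w hw)


lemma eg_core [Fintype V] [DecidableEq V] {G : SimpleGraph V} [DecidableRel G.Adj]
    (k : ℕ) (hk : 1 ≤ k) :
    ∀ (n : ℕ) (s : Finset V), s.card = n →
      (k - 1) * s.card < ∑ v ∈ s, (G.neighborFinset v ∩ s).card →
      ∃ (u v : V) (p : G.Walk u v), p.IsPath ∧ p.length = k ∧ ∀ x ∈ p.support, x ∈ s := by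
  intro n
  induction n using Nat.strong_induction_on with
  | _ n ih =>
  intro s hs H
  classical
  by_cases hlow : ∃ v ∈ s, 2 * (G.neighborFinset v ∩ s).card ≤ k - 1
  · -- delete a low-degree vertex
    obtain ⟨v, hv, hdv⟩ := hlow
    set s' := s.erase v with hs'
    have hcard : s.card = s'.card + 1 := by
      rw [hs', Finset.card_erase_of_mem hv]
      have : 1 ≤ s.card := Finset.card_pos.mpr ⟨v, hv⟩
      omega
    have step : ∀ x ∈ s', (G.neighborFinset x ∩ s).card ≤
        (G.neighborFinset x ∩ s').card + if G.Adj v x then 1 else 0 := by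
      intro x hx
      have heq : G.neighborFinset x ∩ s' = (G.neighborFinset x ∩ s).erase v := by
        ext y
        simp only [hs', Finset.mem_inter, Finset.mem_erase]
        tauto
      by_cases hvx : v ∈ G.neighborFinset x ∩ s
      · have hadj : G.Adj v x :=
          ((G.mem_neighborFinset x v).mp (Finset.mem_of_mem_inter_left hvx)).symm
        have hpos : 1 ≤ (G.neighborFinset x ∩ s).card := Finset.card_pos.mpr ⟨v, hvx⟩
        rw [heq, Finset.card_erase_of_mem hvx, if_pos hadj]
        omega
      · rw [heq, Finset.erase_eq_of_notMem hvx]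
        split <;> omega
    have hsum1 : ∑ x ∈ s', (G.neighborFinset x ∩ s).card ≤
        (∑ x ∈ s', (G.neighborFinset x ∩ s').card) +
          ∑ x ∈ s', (if G.Adj v x then 1 else 0) := by
      rw [← Finset.sum_add_distrib]
      exact Finset.sum_le_sum step
    have hsum2 : (∑ x ∈ s', (if G.Adj v x then 1 else 0)) ≤ (G.neighborFinset v ∩ s).card := by
      rw [← Finset.card_filter]
      refine Finset.card_le_card ?_
      intro x hx
      rw [Finset.mem_filter] at hx
      exact Finset.mem_inter.mpr ⟨(G.mem_neighborFinset v x).mpr hx.2,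
        Finset.mem_of_mem_erase hx.1⟩
    have hsplit : ∑ x ∈ s, (G.neighborFinset x ∩ s).card =
        (G.neighborFinset v ∩ s).card + ∑ x ∈ s', (G.neighborFinset x ∩ s).card :=
      (Finset.add_sum_erase s _ hv).symm
    have H' : (k - 1) * s'.card < ∑ x ∈ s', (G.neighborFinset x ∩ s').card := by
      have hmul : (k - 1) * s.card = (k - 1) * s'.card + (k - 1) := by
        rw [hcard, Nat.mul_add, Nat.mul_one]
      omega
    obtain ⟨u, w, p, hp1, hp2, hp3⟩ := ih s'.card (by omega) s' rfl H'
    exact ⟨u, w, p, hp1, hp2, fun x hx => Finset.mem_of_mem_erase (hp3 x hx)⟩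
  · push_neg at hlow
    have hlow' : ∀ v ∈ s, k ≤ 2 * (G.neighborFinset v ∩ s).card := by
      intro v hv; have := hlow v hv; omega
    have hne : s.Nonempty := by
      rcases s.eq_empty_or_nonempty with rfl | h
      · simp at H
      · exact h
    obtain ⟨v₀, hv₀⟩ := hne
    set Q : ℕ → Prop := fun l => ∃ (u v : V) (p : G.Walk u v),
      p.IsPath ∧ p.length = l ∧ ∀ x ∈ p.support, x ∈ s with hQ
    have hQ0 : Q 0 := ⟨v₀, v₀, .nil, by simp, rfl, by simpa using hv₀⟩
    have hbound : ∀ l, Q l → l < s.card := by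
      rintro l ⟨u, v, p, hp, rfl, hps⟩
      exact eg_length_lt hp hps
    set L := Nat.findGreatest Q s.card with hLdef
    have hQL : Q L := Nat.findGreatest_spec (Nat.zero_le _) hQ0
    have hmax : ∀ l, L < l → ¬ Q l := fun l hl hQl =>
      Nat.findGreatest_is_greatest hl (le_of_lt (hbound l hQl)) hQl
    obtain ⟨va, vb, P, hP, hPlen, hPs⟩ := hQL
    rcases le_or_gt k L with hkL | hLk
    · obtain ⟨w, q, hq1, hq2, hq3⟩ := eg_truncate P hP k (by omega)
      exact ⟨w, vb, q, hq1, hq2, fun x hx => hPs x (hq3 x hx)⟩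
    · -- L < k : derive a contradiction-free recursion via closed set S
      have hvas : va ∈ s := hPs va P.start_mem_support
      have hvbs : vb ∈ s := hPs vb P.end_mem_support
      have hfront : ∀ y, G.Adj va y → y ∈ s → y ∈ P.support := by
        intro y hadj hys
        by_contra hns
        refine hmax (L + 1) (Nat.lt_succ_self L)
          ⟨y, vb, .cons hadj.symm P, hP.cons hns, by simp [hPlen], ?_⟩
        intro x hx
        rcases List.mem_cons.mp (by simpa [Walk.support_cons] using hx) with rfl | h
        · exact hys
        · exact hPs _ h
      have hback : ∀ y, G.Adj vb y → y ∈ s → y ∈ P.support := by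
        intro y hadj hys
        by_contra hns
        refine hmax (L + 1) (Nat.lt_succ_self L)
          ⟨y, va, .cons hadj.symm P.reverse,
            hP.reverse.cons (by rwa [Walk.support_reverse, List.mem_reverse]), by simp [hPlen], ?_⟩
        intro x hx
        rcases List.mem_cons.mp (by simpa [Walk.support_cons] using hx) with rfl | h
        · exact hys
        · exact hPs _ h
      set A := (Finset.range L).filter (fun i => G.Adj vb (P.getVert i)) with hA
      set B := (Finset.range L).filter (fun i => G.Adj va (P.getVert (i + 1))) with hB
      have hAcard : (G.neighborFinset vb ∩ s).card ≤ A.card := by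
        refine le_trans (Finset.card_le_card (show G.neighborFinset vb ∩ s ⊆ A.image P.getVert
          from fun y hy => ?_)) Finset.card_image_le
        rw [Finset.mem_inter, G.mem_neighborFinset] at hy
        obtain ⟨hadj, hys⟩ := hy
        obtain ⟨j, hjy, hjL⟩ := Walk.mem_support_iff_exists_getVert.mp (hback y hadj hys)
        have hjne : j ≠ P.length := by
          intro h
          rw [h, Walk.getVert_length] at hjy
          exact hadj.ne' hjy.symm
        refine Finset.mem_image.mpr ⟨j, ?_, hjy⟩
        rw [hA, Finset.mem_filter, Finset.mem_range]
        exact ⟨by omega, by rw [hjy]; exact hadj⟩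
      have hBcard : (G.neighborFinset va ∩ s).card ≤ B.card := by
        refine le_trans (Finset.card_le_card (show G.neighborFinset va ∩ s ⊆
          B.image (fun i => P.getVert (i + 1)) from fun y hy => ?_)) Finset.card_image_le
        rw [Finset.mem_inter, G.mem_neighborFinset] at hy
        obtain ⟨hadj, hys⟩ := hy
        obtain ⟨j, hjy, hjL⟩ := Walk.mem_support_iff_exists_getVert.mp (hfront y hadj hys)
        have hjne : j ≠ 0 := by
          intro h
          rw [h, Walk.getVert_zero] at hjy
          exact hadj.ne' hjy.symm
        refine Finset.mem_image.mpr ⟨j - 1, ?_, by rw [show j - 1 + 1 = j by omega]; exact hjy⟩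
        rw [hB, Finset.mem_filter, Finset.mem_range]
        exact ⟨by omega, by rw [show j - 1 + 1 = j by omega, hjy]; exact hadj⟩
      have hABk : k ≤ A.card + B.card := by
        have h1 := hlow' va hvas
        have h2 := hlow' vb hvbs
        omega
      have hABL : (A ∪ B).card ≤ L := by
        refine le_trans (Finset.card_le_card (fun i hi => ?_)) (Finset.card_range L).le
        rcases Finset.mem_union.mp hi with h | h
        · exact Finset.mem_of_mem_filter i h
        · exact Finset.mem_of_mem_filter i h
      have hABint : (A ∩ B).Nonempty := by
        refine Finset.card_pos.mp ?_
        have := Finset.card_union_add_card_inter A B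
        omega
      obtain ⟨i, hiAB⟩ := hABint
      obtain ⟨hiA, hiB⟩ := Finset.mem_inter.mp hiAB
      rw [hA, Finset.mem_filter, Finset.mem_range] at hiA
      rw [hB, Finset.mem_filter, Finset.mem_range] at hiB
      have hiL : i < P.length := by omega
      have hclosed : ∀ x ∈ P.support, ∀ y, G.Adj x y → y ∈ s → y ∈ P.support := by
        intro x hx y hxy hys
        by_contra hns
        obtain ⟨z, q, hq1, hq2, hq3⟩ := eg_extend hP hiL hiA.2 hiB.2 hx hxy hns
        refine hmax (L + 1) (Nat.lt_succ_self L) ⟨y, z, q, hq1, by omega, ?_⟩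
        intro w hw
        rcases hq3 w hw with rfl | h
        · exact hys
        · exact hPs w h
      set S := P.support.toFinset with hS
      have hSsub : S ⊆ s := fun x hx => hPs x (List.mem_toFinset.mp hx)
      have hScard : S.card = L + 1 := by
        rw [hS, List.toFinset_card_of_nodup hP.support_nodup, Walk.length_support, hPlen]
      set s' := s \ S with hs'
      have hcards : s'.card + S.card = s.card := Finset.card_sdiff_add_card_eq_card hSsub
      have hdeg_eq : ∀ x ∈ s', G.neighborFinset x ∩ s' = G.neighborFinset x ∩ s := by
        intro x hx
        ext y
        simp only [Finset.mem_inter, hs', Finset.mem_sdiff]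
        constructor
        · rintro ⟨h1, h2, _⟩; exact ⟨h1, h2⟩
        · rintro ⟨h1, h2⟩
          refine ⟨h1, h2, fun hyS => ?_⟩
          have hxS : x ∈ S := by
            rw [hS, List.mem_toFinset]
            refine hclosed y (by rwa [hS, List.mem_toFinset] at hyS) x
              ((G.mem_neighborFinset x y).mp h1).symm ?_
            exact (Finset.mem_sdiff.mp hx).1
          exact (Finset.mem_sdiff.mp hx).2 hxS
      have hdegS : ∀ x ∈ S, (G.neighborFinset x ∩ s).card ≤ L := by
        intro x hx
        have hsubS : G.neighborFinset x ∩ s ⊆ S.erase x := by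
          intro y hy
          rw [Finset.mem_inter, G.mem_neighborFinset] at hy
          refine Finset.mem_erase.mpr ⟨hy.1.ne', ?_⟩
          rw [hS, List.mem_toFinset]
          exact hclosed x (by rwa [hS, List.mem_toFinset] at hx) y hy.1 hy.2
        have := Finset.card_le_card hsubS
        rw [Finset.card_erase_of_mem hx, hScard] at this
        omega
      have hsumS : ∑ x ∈ S, (G.neighborFinset x ∩ s).card ≤ (L + 1) * (k - 1) := by
        calc ∑ x ∈ S, (G.neighborFinset x ∩ s).card ≤ ∑ _x ∈ S, L :=
              Finset.sum_le_sum hdegS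
          _ = (L + 1) * L := by rw [Finset.sum_const, hScard, smul_eq_mul]
          _ ≤ (L + 1) * (k - 1) := Nat.mul_le_mul_left _ (by omega)
      have hsplit : (∑ x ∈ s', (G.neighborFinset x ∩ s).card) +
          ∑ x ∈ S, (G.neighborFinset x ∩ s).card = ∑ x ∈ s, (G.neighborFinset x ∩ s).card :=
        Finset.sum_sdiff hSsub
      have hsum_eq : ∑ x ∈ s', (G.neighborFinset x ∩ s').card =
          ∑ x ∈ s', (G.neighborFinset x ∩ s).card :=
        Finset.sum_congr rfl (fun x hx => by rw [hdeg_eq x hx])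
      have H' : (k - 1) * s'.card < ∑ x ∈ s', (G.neighborFinset x ∩ s').card := by
        have hmul : (k - 1) * s.card = (k - 1) * s'.card + (k - 1) * (L + 1) := by
          rw [← hcards, hScard, Nat.mul_add]
        have hcomm : (L + 1) * (k - 1) = (k - 1) * (L + 1) := Nat.mul_comm _ _
        omega
      have hlt : s'.card < n := by omega
      obtain ⟨u, w, p, hp1, hp2, hp3⟩ := ih s'.card hlt s' rfl H'
      exact ⟨u, w, p, hp1, hp2, fun x hx => (Finset.mem_sdiff.mp (hp3 x hx)).1⟩

end ErdosGallaiHelpers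



/-- Erdős–Gallai theorem, part 1: every simple graph on `n` vertices with more than
`(k-1)n/2` edges contains a path with `k` edges. -/
theorem stmt_0 {V : Type*} [Fintype V] [DecidableEq V] (G : SimpleGraph V)
    [DecidableRel G.Adj] (n k : ℕ) (hn : Fintype.card V = n)
    (he : ((k : ℝ) - 1) * n / 2 < G.edgeFinset.card) :
    ∃ (u v : V) (p : G.Walk u v), p.IsPath ∧ p.length = k := by
  rcases Nat.eq_zero_or_pos k with rfl | hk
  · have hne : Nonempty V := by
      by_contra h
      rw [not_nonempty_iff] at h
      have h0 : Fintype.card V = 0 := Fintype.card_eq_zero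
      have hedge : G.edgeFinset.card = 0 := by
        have : IsEmpty (Sym2 V) := by infer_instance
        simp [Finset.card_eq_zero, Finset.eq_empty_of_isEmpty]
      rw [h0] at hn
      rw [← hn, hedge] at he
      norm_num at he
    obtain ⟨v⟩ := hne
    exact ⟨v, v, .nil, by simp, rfl⟩
  · have hnat : (k - 1) * Fintype.card V < 2 * G.edgeFinset.card := by
      have h1 : ((k : ℝ) - 1) * n < 2 * G.edgeFinset.card := by linarith
      have h2 : (((k - 1 : ℕ) : ℝ)) = (k : ℝ) - 1 := by
        push_cast [Nat.cast_sub hk]; ring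
      rw [← h2, ← hn] at h1
      exact_mod_cast h1
    have hsum : ∑ v ∈ Finset.univ, ((G.neighborFinset v ∩ Finset.univ).card) =
        2 * G.edgeFinset.card := by
      simp only [Finset.inter_univ]
      exact G.sum_degrees_eq_twice_card_edges
    have H : (k - 1) * (Finset.univ : Finset V).card <
        ∑ v ∈ Finset.univ, (G.neighborFinset v ∩ Finset.univ).card := by
      rw [hsum, Finset.card_univ]
      exact hnat
    obtain ⟨u, v, p, hp1, hp2, _⟩ := eg_core k hk (Finset.univ : Finset V).card
      Finset.univ rfl H
    exact ⟨u, v, p, hp1, hp2⟩
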